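/- Let (R,m) be a one-dimensional Noetherian local ring and q=(x) a parameter ideal. Let l = min{ i : ((x^{n+1}):x^{n}) = ((x^{i+1}):x^{i}) for all n ≥ i } and x̃ = ((x^{l+1}):x^{l}). Then the zeroth Hilbert coefficient satisfies e_0(q) = λ_R(R/x̃). -/

import Mathlib

set_option synthInstance.maxHeartbeats 1000000
set_option maxHeartbeats 1000000

open IsLocalRing Polynomial

/-- The length `λ_R(M)` of an `R`-module `M`, as an integer (the Krull dimension of
its lattice of submodules; for a finite-length module this is the usual length). -/
noncomputable def modLength (R M : Type*) [CommRing R] [AddCommGroup M] [Module R M] : ℤ :=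
  (WithBot.unbotD 0 (Order.krullDim (Submodule R M))).toNat

/-- The binomial coefficient `binom(x, k)` for `x : ℚ`, `k : ℕ`. -/
noncomputable def binomQ (x : ℚ) (k : ℕ) : ℚ :=
  (∏ j ∈ Finset.range k, (x - j)) / (Nat.factorial k)

/-- The function `n ↦ ∑_{i=0}^{d} (-1)^i eᵢ binom(n+d-i-1, d-i)`; when the `e i` are the
Hilbert coefficients of an ideal this is its Hilbert–Samuel polynomial. -/
noncomputable def hilbPoly (d : ℕ) (e : ℕ → ℤ) (n : ℤ) : ℚ :=
  ∑ i ∈ Finset.range (d + 1), (-1 : ℚ) ^ i * (e i) * binomQ ((n : ℚ) + d - i - 1) (d - i)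

/-- The Hilbert function `H_q(n) = λ_R(R/qⁿ)` (with `H_q(n) = 0` for `n ≤ 0`). -/
noncomputable def hilbFn (R : Type*) [CommRing R] (q : Ideal R) (n : ℤ) : ℚ :=
  (modLength R (R ⧸ q ^ n.toNat) : ℚ)

/-- The first difference operator `Δ` on functions `ℤ → ℚ`: `Δ(f)(n) = f(n+1) - f(n)`. -/
noncomputable def deltaFn (f : ℤ → ℚ) : ℤ → ℚ := fun n => f (n + 1) - f n

/-- The colon ideal `((x^{i+1}) : x^i)`. -/
noncomputable def colonPow (R : Type*) [CommRing R] (x : R) (i : ℕ) : Ideal R :=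
  (Ideal.span {x ^ (i + 1)}).colon (Ideal.span {x ^ i})

/-- The length `λ_R(J/I)` of the subquotient `J/I` (for ideals `I ⊆ J`). -/
noncomputable def quotLength (R : Type*) [CommRing R] (J I : Ideal R) : ℤ :=
  modLength R (↥J ⧸ Submodule.comap J.subtype I)

/-- `y` is a superficial element for `I`: there is `c ≥ 0` with
`(I^{n+1} : y) ∩ I^c = I^n` for all `n ≥ c`. -/
def IsSuperficial (R : Type*) [CommRing R] (I : Ideal R) (y : R) : Prop :=
  ∃ c : ℕ, ∀ n ≥ c, (I ^ (n + 1)).colon (Ideal.span {y}) ⊓ I ^ c = I ^ n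

/-- `q` is a parameter ideal of the `d`-dimensional local ring `R`: it is generated by a
system of `d` parameters, i.e. by `d` elements generating an `m`-primary ideal. -/
def IsParameterIdeal (R : Type*) [CommRing R] [IsLocalRing R] (d : ℕ) (q : Ideal R) : Prop :=
  (∃ f : Fin d → R, q = Ideal.span (Set.range f)) ∧ q.radical = maximalIdeal R

/-- `depth R ≥ k`: there is an `R`-regular sequence of length `k` inside the maximal ideal. -/
def depthGE (R : Type*) [CommRing R] [IsLocalRing R] (k : ℕ) : Prop :=
  ∃ rs : List R, rs.length = k ∧ (∀ r ∈ rs, r ∈ maximalIdeal R) ∧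
    RingTheory.Sequence.IsRegular R rs

/-- The ideal `I·R[It]` of the Rees algebra `R[It]`. -/
noncomputable def grKer (R : Type*) [CommRing R] (I : Ideal R) : Ideal (reesAlgebra I) :=
  Ideal.span {x : reesAlgebra I | ∃ a ∈ I, (x : R[X]) = Polynomial.C a}

/-- The associated graded ring `gr_I(R) = ⊕_{n≥0} Iⁿ/Iⁿ⁺¹`, realized as `R[It]/I·R[It]`. -/
noncomputable abbrev grRing (R : Type*) [CommRing R] (I : Ideal R) :=
  reesAlgebra I ⧸ grKer R I

/-- The irrelevant ideal `gr_I(R)₊`, generated by the image `It` of the degree-one part. -/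
noncomputable def grPlus (R : Type*) [CommRing R] (I : Ideal R) : Ideal (grRing R I) :=
  Ideal.span ((Ideal.Quotient.mk (grKer R I)) ''
    {x : reesAlgebra I | ∃ a ∈ I, (x : R[X]) = Polynomial.C a * Polynomial.X})

/-- `depth gr_I(R) = grade gr_I(R)₊ ≥ k`: there is a `gr_I(R)`-regular sequence of
length `k` contained in the irrelevant ideal. -/
def grDepthGE (R : Type*) [CommRing R] (I : Ideal R) (k : ℕ) : Prop :=
  ∃ rs : List (grRing R I), rs.length = k ∧ (∀ r ∈ rs, r ∈ grPlus R I) ∧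
    RingTheory.Sequence.IsRegular (grRing R I) rs

section MyHelpers

lemma my_height_add_one_le {α : Type*} [Preorder α] {x y : α} (h : x < y) :
    Order.height x + 1 ≤ Order.height y := by
  have hne : Nonempty { p : LTSeries α // p.last = x } := ⟨RelSeries.singleton _ x, rfl⟩
  rw [Order.height_eq_iSup_last_eq, iSup_subtype', ENat.iSup_add]
  apply iSup_le
  rintro ⟨p, hp⟩
  have := Order.length_le_height_last (p := p.snoc y (hp ▸ h))
  simpa using this

lemma height_top_subsingleton {α : Type*} [Preorder α] [Subsingleton α] [OrderTop α] :
    Order.height (⊤ : α) = 0 := by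
  refine le_antisymm (Order.height_le fun p hp => ?_) (zero_le)
  norm_num
  by_contra hlen
  have := p.step ⟨0, Nat.pos_of_ne_zero hlen⟩
  exact absurd (Subsingleton.elim _ _) this.ne

lemma height_top_le_one_of_simpleOrder {α : Type*} [PartialOrder α] [BoundedOrder α]
    [IsSimpleOrder α] : Order.height (⊤ : α) ≤ 1 := by
  refine Order.height_le fun p hp => ?_
  by_contra hlen
  push_neg at hlen
  norm_cast at hlen
  have h2 : 2 ≤ p.length := hlen
  have h01 := p.step ⟨0, by omega⟩
  have h12 := p.step ⟨1, by omega⟩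
  simp only [Fin.succ_mk, Fin.castSucc_mk] at h01 h12
  rcases IsSimpleOrder.eq_bot_or_eq_top (p ⟨1, by omega⟩) with h | h
  · exact absurd (h ▸ h01) (by simp)
  · exact absurd (h ▸ h12) (by simp [not_top_lt])

variable {R M : Type*} [Ring R] [AddCommGroup M] [Module R M]

lemma my_step_strict (N : Submodule R M) {a b : Submodule R M} (hab : a < b) :
    Submodule.comap N.subtype a < Submodule.comap N.subtype b ∨
      Submodule.map N.mkQ a < Submodule.map N.mkQ b := by
  by_contra hc
  push_neg at hc
  obtain ⟨h1, h2⟩ := hc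
  have e1 : Submodule.comap N.subtype a = Submodule.comap N.subtype b :=
    ((Submodule.comap_mono hab.le).lt_or_eq.resolve_left h1)
  have e2 : Submodule.map N.mkQ a = Submodule.map N.mkQ b :=
    ((Submodule.map_mono hab.le).lt_or_eq.resolve_left h2)
  have hb : b ≤ a ⊔ N := by
    calc b ≤ Submodule.comap N.mkQ (Submodule.map N.mkQ b) := Submodule.le_comap_map _ _
    _ = Submodule.comap N.mkQ (Submodule.map N.mkQ a) := by rw [e2]
    _ = N ⊔ a := Submodule.comap_map_mkQ N a
    _ = a ⊔ N := sup_comm _ _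
  have hbN : N ⊓ b ≤ a := by
    rw [← Submodule.map_comap_subtype, ← e1, Submodule.map_comap_subtype]
    exact inf_le_right
  have : b ≤ a := by
    calc b = (a ⊔ N) ⊓ b := (inf_eq_right.2 hb).symm
    _ = a ⊔ (N ⊓ b) := sup_inf_assoc_of_le _ hab.le
    _ ≤ a ⊔ a := sup_le_sup_left hbN a
    _ = a := sup_idem a
  exact hab.not_ge this

lemma my_height_top_le_add (N : Submodule R M) :
    Order.height (⊤ : Submodule R M) ≤
      Order.height (⊤ : Submodule R ↥N) + Order.height (⊤ : Submodule R (M ⧸ N)) := by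
  apply Order.height_le
  intro p _
  suffices H : ∀ i : Fin (p.length + 1), (i.val : ℕ∞) ≤
      Order.height (Submodule.comap N.subtype (p i)) +
        Order.height (Submodule.map N.mkQ (p i)) by
    refine le_trans (H (Fin.last _)) ?_
    exact add_le_add (Order.height_mono le_top) (Order.height_mono le_top)
  intro i
  induction i using Fin.induction with
  | zero => simp
  | succ i ih =>
    have hstep := p.step i
    have key : ((i.val : ℕ∞) + 1) ≤
        Order.height (Submodule.comap N.subtype (p i.succ)) +
          Order.height (Submodule.map N.mkQ (p i.succ)) := by
      rcases my_step_strict N hstep with h | h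
      · calc (i.val : ℕ∞) + 1
            ≤ (Order.height (Submodule.comap N.subtype (p i.castSucc)) +
                Order.height (Submodule.map N.mkQ (p i.castSucc))) + 1 := add_le_add_left ih 1
          _ = (Order.height (Submodule.comap N.subtype (p i.castSucc)) + 1) +
                Order.height (Submodule.map N.mkQ (p i.castSucc)) := add_right_comm _ _ _
          _ ≤ _ := add_le_add (my_height_add_one_le h)
                (Order.height_mono (Submodule.map_mono hstep.le))
      · calc (i.val : ℕ∞) + 1
            ≤ (Order.height (Submodule.comap N.subtype (p i.castSucc)) +
                Order.height (Submodule.map N.mkQ (p i.castSucc))) + 1 := add_le_add_left ih 1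
          _ = Order.height (Submodule.comap N.subtype (p i.castSucc)) +
                (Order.height (Submodule.map N.mkQ (p i.castSucc)) + 1) := add_assoc _ _ _
          _ ≤ _ := add_le_add (Order.height_mono (Submodule.comap_mono hstep.le))
                (my_height_add_one_le h)
    simpa using key

lemma my_add_height_le (N : Submodule R M) :
    Order.height (⊤ : Submodule R ↥N) + Order.height (⊤ : Submodule R (M ⧸ N)) ≤
      Order.height (⊤ : Submodule R M) := by
  have key : ∀ (a : LTSeries (Submodule R ↥N)) (b : LTSeries (Submodule R (M ⧸ N))),
      (a.length : ℕ∞) + (b.length : ℕ∞) ≤ Order.height (⊤ : Submodule R M) := by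
    intro a b
    have hmapinj : StrictMono (Submodule.map N.subtype) :=
      Submodule.map_strictMono_of_injective N.injective_subtype
    have hcomapsurj : StrictMono (Submodule.comap N.mkQ) :=
      Submodule.comap_strictMono_of_surjective N.mkQ_surjective
    set c1 : LTSeries (Submodule R M) := a.map (Submodule.map N.subtype) hmapinj with hc1
    set c2 : LTSeries (Submodule R M) := b.map (Submodule.comap N.mkQ) hcomapsurj with hc2
    have hle : c1.last ≤ c2.head := by
      calc c1.last = Submodule.map N.subtype a.last := by simp [hc1]
        _ ≤ N := by
              have := Submodule.map_mono (f := N.subtype) (le_top : a.last ≤ ⊤)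
              simpa [Submodule.map_top, Submodule.range_subtype] using this
        _ = Submodule.comap N.mkQ ⊥ := by simp [Submodule.ker_mkQ]
        _ ≤ Submodule.comap N.mkQ b.head := Submodule.comap_mono bot_le
      -- simp lemma names may need fixing
    rcases eq_or_lt_of_le hle with h | h
    · have hh := Order.length_le_height (p := c1.smash c2 h) (x := (⊤ : Submodule R M)) le_top
      have hlen : (c1.smash c2 h).length = a.length + b.length := rfl
      rw [hlen] at hh
      calc (a.length : ℕ∞) + (b.length : ℕ∞) = ((a.length + b.length : ℕ) : ℕ∞) := by push_cast; rfl
        _ ≤ _ := hh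
    · have hh := Order.length_le_height (p := RelSeries.append c1 c2 h) (x := (⊤ : Submodule R M)) le_top
      have hlen : (RelSeries.append c1 c2 h).length = a.length + b.length + 1 := rfl
      rw [hlen] at hh
      calc (a.length : ℕ∞) + (b.length : ℕ∞) = ((a.length + b.length : ℕ) : ℕ∞) := by push_cast; rfl
        _ ≤ ((a.length + b.length + 1 : ℕ) : ℕ∞) := by norm_cast; omega
        _ ≤ _ := hh
  have h1 : Order.height (⊤ : Submodule R ↥N) = ⨆ a : LTSeries (Submodule R ↥N), (a.length : ℕ∞) :=
    le_antisymm (Order.height_le fun p _ => le_iSup (fun q : LTSeries _ => (q.length : ℕ∞)) p)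
      (iSup_le fun p => Order.length_le_height le_top)
  have h2 : Order.height (⊤ : Submodule R (M ⧸ N)) =
      ⨆ b : LTSeries (Submodule R (M ⧸ N)), (b.length : ℕ∞) :=
    le_antisymm (Order.height_le fun p _ => le_iSup (fun q : LTSeries _ => (q.length : ℕ∞)) p)
      (iSup_le fun p => Order.length_le_height le_top)
  rw [h1, h2]
  haveI : Nonempty (LTSeries (Submodule R ↥N)) := ⟨RelSeries.singleton _ ⊥⟩
  haveI : Nonempty (LTSeries (Submodule R (M ⧸ N))) := ⟨RelSeries.singleton _ ⊥⟩
  rw [ENat.iSup_add]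
  apply iSup_le
  intro a
  rw [ENat.add_iSup]
  exact iSup_le fun b => key a b

lemma my_height_ne_top {M : Type*} [AddCommGroup M] [Module R M] (h : IsFiniteLength R M) :
    Order.height (⊤ : Submodule R M) ≠ ⊤ := by
  induction h with
  | of_subsingleton =>
    rename_i M' _ _ _
    have hb : ∀ p : Submodule R M', p = ⊥ := fun p => by
      ext m
      simp only [Submodule.mem_bot]
      constructor
      · intro _; exact Subsingleton.elim m 0
      · rintro rfl; exact p.zero_mem
    haveI : Subsingleton (Submodule R M') := ⟨fun p q => (hb p).trans (hb q).symm⟩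
    rw [height_top_subsingleton]
    exact (by norm_num : (0:ℕ∞) ≠ ⊤)
  | of_simple_quotient h ih =>
    rename_i M' _ _ N _
    have hle := my_height_top_le_add N
    have hQ : Order.height (⊤ : Submodule R (M' ⧸ N)) ≤ 1 := height_top_le_one_of_simpleOrder
    intro htop
    rw [htop] at hle
    have : (⊤ : ℕ∞) ≤ Order.height (⊤ : Submodule R ↥N) + 1 :=
      le_trans hle (add_le_add_right hQ _)
    have h1 : Order.height (⊤ : Submodule R ↥N) + 1 < ⊤ := by
      rw [ENat.add_lt_top]
      exact ⟨lt_top_iff_ne_top.2 ih, by norm_num⟩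
    exact absurd this (not_le.2 h1)

end MyHelpers

section MyLen
variable (R : Type*) [CommRing R]

lemma modLength_eq_height (M : Type*) [AddCommGroup M] [Module R M] :
    modLength R M = ((Order.height (⊤ : Submodule R M)).toNat : ℤ) := by
  rw [modLength, ← Order.height_top_eq_krullDim, WithBot.unbotD_coe]

lemma modLength_congr {M M₂ : Type*} [AddCommGroup M] [Module R M] [AddCommGroup M₂]
    [Module R M₂] (e : M ≃ₗ[R] M₂) : modLength R M = modLength R M₂ := by
  unfold modLength
  rw [Order.krullDim_eq_of_orderIso (Submodule.orderIsoMapComap e)]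

lemma modLength_add {M : Type*} [AddCommGroup M] [Module R M] [IsNoetherian R M]
    [IsArtinian R M] (N : Submodule R M) :
    modLength R M = modLength R ↥N + modLength R (M ⧸ N) := by
  have hN : IsFiniteLength R ↥N :=
    isFiniteLength_iff_isNoetherian_isArtinian.mpr ⟨inferInstance, inferInstance⟩
  have hQ : IsFiniteLength R (M ⧸ N) :=
    isFiniteLength_iff_isNoetherian_isArtinian.mpr ⟨inferInstance, inferInstance⟩
  have hEq : Order.height (⊤ : Submodule R M) =
      Order.height (⊤ : Submodule R ↥N) + Order.height (⊤ : Submodule R (M ⧸ N)) :=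
    le_antisymm (my_height_top_le_add N) (my_add_height_le N)
  rw [modLength_eq_height, modLength_eq_height, modLength_eq_height, hEq,
    ENat.toNat_add (my_height_ne_top hN) (my_height_ne_top hQ)]
  push_cast
  ring

end MyLen

section MyArt
variable {R : Type*} [CommRing R] [IsLocalRing R]

lemma art0 (M : Type*) [AddCommGroup M] [Module R M] [Module.Finite R M]
    (hsmul : ∀ a ∈ maximalIdeal R, ∀ m : M, a • m = 0) : IsArtinian R M := by
  have htor : Module.IsTorsionBySet R M (maximalIdeal R) := fun m a => hsmul a.1 a.2 m
  letI : Module (R ⧸ maximalIdeal R) M := htor.module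
  haveI : IsScalarTower R (R ⧸ maximalIdeal R) M := htor.isScalarTower
  letI : Field (R ⧸ maximalIdeal R) := Ideal.Quotient.field _
  haveI : Module.Finite (R ⧸ maximalIdeal R) M :=
    Module.Finite.of_restrictScalars_finite R _ _
  have hart : IsArtinian (R ⧸ maximalIdeal R) M := inferInstance
  let g : Submodule R M → Submodule (R ⧸ maximalIdeal R) M := fun p =>
    { carrier := p
      add_mem' := fun ha hb => p.add_mem ha hb
      zero_mem' := p.zero_mem
      smul_mem' := fun s x hx => by
        obtain ⟨r, rfl⟩ := Ideal.Quotient.mk_surjective s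
        have hrw : (Ideal.Quotient.mk (maximalIdeal R) r) • x = r • x := by
          rw [← Ideal.Quotient.algebraMap_eq, algebraMap_smul]
        rw [hrw]
        exact p.smul_mem r hx }
  rw [isArtinian_iff]
  have hwf := (isArtinian_iff _ _).mp hart
  refine Subrelation.wf (r := InvImage (· < ·) g) ?_ (InvImage.wf g hwf)
  intro p q hpq
  show g p < g q
  rw [← SetLike.coe_ssubset_coe]
  show (p : Set M) ⊂ (q : Set M)
  rw [SetLike.coe_ssubset_coe]
  exact hpq

lemma artinian_of_pow_le [IsNoetherianRing R] {I : Ideal R} {k : ℕ}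
    (h : maximalIdeal R ^ k ≤ I) : IsArtinian R (R ⧸ I) := by
  induction k generalizing I with
  | zero =>
    rw [pow_zero, Ideal.one_eq_top] at h
    have : I = ⊤ := top_le_iff.mp h
    haveI : Subsingleton (R ⧸ I) := Submodule.Quotient.subsingleton_iff.mpr this
    infer_instance
  | succ k ih =>
    set I' : Ideal R := I ⊔ maximalIdeal R ^ k with hI'
    have hart' : IsArtinian R (R ⧸ I') := ih le_sup_right
    set S : Submodule R (R ⧸ I) := Submodule.map I.mkQ I' with hS
    rw [isArtinian_iff_submodule_quotient S]
    constructor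
    · -- S is fg and killed by m
      haveI : Module.Finite R S := by
        have hfg : I'.FG := IsNoetherian.noetherian I'
        exact Module.Finite.iff_fg.mpr (Submodule.FG.map _ hfg)
      apply art0
      intro a ha m
      obtain ⟨m, hm⟩ := m
      obtain ⟨y, hy, rfl⟩ := hm
      have key : a * y ∈ I := by
        rcases Submodule.mem_sup.mp (hI' ▸ hy) with ⟨u, hu, v, hv, rfl⟩
        rw [mul_add]
        apply I.add_mem (I.mul_mem_left a hu)
        have : a * v ∈ maximalIdeal R ^ (k + 1) := by
          rw [pow_succ']
          exact Ideal.mul_mem_mul ha hv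
        exact h this
      -- a • ⟨mkQ y, _⟩ = 0 in S
      apply Subtype.ext
      show a • (I.mkQ y) = 0
      rw [← map_smul]
      rw [Submodule.mkQ_apply, Submodule.Quotient.mk_eq_zero]
      simpa [smul_eq_mul] using key
    · have e := Submodule.quotientQuotientEquivQuotient I I' le_sup_left
      exact isArtinian_of_linearEquiv e.symm

end MyArt

/-- In a one-dimensional Noetherian local ring with parameter ideal `q = (x)`,
with `l = min{i : ((x^{n+1}):x^n) = ((x^{i+1}):x^i) for all n ≥ i}` and `x̃ = ((x^{l+1}):x^l)`,
the zeroth Hilbert coefficient satisfies `e₀(q) = λ_R(R/x̃)`. -/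
theorem stmt0 (R : Type*) [CommRing R] [IsNoetherianRing R] [IsLocalRing R]
    (hdim : ringKrullDim R = 1) (x : R)
    (hx : (Ideal.span {x}).radical = maximalIdeal R)
    (l : ℕ) (hl : IsLeast {i : ℕ | ∀ n ≥ i, colonPow R x n = colonPow R x i} l)
    (e : ℕ → ℤ)
    (he : ∃ N : ℤ, ∀ n ≥ N, hilbPoly 1 e n = hilbFn R (Ideal.span {x}) n) :
    e 0 = modLength R (R ⧸ colonPow R x l) := by
  obtain ⟨hmem, -⟩ := hl
  obtain ⟨N, hN⟩ := he
  set q : Ideal R := Ideal.span {x} with hq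
  set nn : ℕ := max l (N.toNat + 1) with hnn
  have hnl : l ≤ nn := le_max_left _ _
  have hnN : N ≤ (nn : ℤ) := by
    have h1 : N ≤ (N.toNat : ℤ) := Int.self_le_toNat N
    have h2 : N.toNat + 1 ≤ nn := le_max_right _ _
    have := (Nat.cast_le (α := ℤ)).mpr h2
    push_cast at this
    omega
  have h1 := hN (nn : ℤ) hnN
  have h2 := hN ((nn : ℤ) + 1) (by omega)
  -- polynomial difference equals e 0
  have hpoly : hilbPoly 1 e ((nn : ℤ) + 1) - hilbPoly 1 e (nn : ℤ) = (e 0 : ℚ) := by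
    simp only [hilbPoly, binomQ, Finset.sum_range_succ, Finset.sum_range_zero,
      Finset.prod_range_succ, Finset.prod_range_zero, Nat.factorial]
    push_cast
    ring_nf
  -- hilbFn values
  have hf1 : hilbFn R q (nn : ℤ) = (modLength R (R ⧸ q ^ nn) : ℚ) := by
    rw [hilbFn, Int.toNat_natCast]
  have hf2 : hilbFn R q ((nn : ℤ) + 1) = (modLength R (R ⧸ q ^ (nn + 1)) : ℚ) := by
    have ht : ((nn : ℤ) + 1).toNat = nn + 1 := by omega
    rw [hilbFn, ht]
  -- key additivity
  have hqpow : ∀ m : ℕ, q ^ m = Ideal.span {x ^ m} := fun m => Ideal.span_singleton_pow x m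
  have key : modLength R (R ⧸ q ^ (nn + 1)) =
      modLength R (R ⧸ q ^ nn) + modLength R (R ⧸ colonPow R x nn) := by
    set I : Ideal R := q ^ (nn + 1) with hI
    set J : Ideal R := q ^ nn with hJ
    have hIJ : I ≤ J := Ideal.pow_le_pow_right (Nat.le_succ nn)
    haveI hNoeth : IsNoetherian R (R ⧸ I) := inferInstance
    haveI hArt : IsArtinian R (R ⧸ I) := by
      have hrad : I.radical = maximalIdeal R := by
        rw [hI, Ideal.radical_pow q (Nat.succ_ne_zero nn), hx]
      obtain ⟨k, hk⟩ := Ideal.exists_radical_pow_le_of_fg (I := I) (IsNoetherian.noetherian _)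
      rw [hrad] at hk
      exact artinian_of_pow_le hk
    set S : Submodule R (R ⧸ I) := Submodule.map (Submodule.mkQ I) J with hS
    have hadd := modLength_add R (M := R ⧸ I) S
    have e1 : ((R ⧸ I) ⧸ S) ≃ₗ[R] R ⧸ J := Submodule.quotientQuotientEquivQuotient I J hIJ
    -- build e2 : ↥S ≃ₗ R ⧸ colonPow R x nn
    set φ : R →ₗ[R] R ⧸ I := (Submodule.mkQ I).comp (LinearMap.toSpanSingleton R R (x ^ nn))
      with hφ
    have hker : LinearMap.ker φ = colonPow R x nn := by
      ext r
      rw [LinearMap.mem_ker, hφ, LinearMap.comp_apply, LinearMap.toSpanSingleton_apply,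
        Submodule.mkQ_apply, Submodule.Quotient.mk_eq_zero]
      rw [colonPow, Ideal.mem_colon_span_singleton, ← hqpow, smul_eq_mul]
    have hrange : LinearMap.range φ = S := by
      rw [hφ, LinearMap.range_comp, ← LinearMap.span_singleton_eq_range,
        Ideal.submodule_span_eq, ← hqpow nn]
    have e2 : (R ⧸ colonPow R x nn) ≃ₗ[R] ↥S :=
      (Submodule.quotEquivOfEq _ _ hker.symm) ≪≫ₗ (LinearMap.quotKerEquivRange φ) ≪≫ₗ
        (LinearEquiv.ofEq _ _ hrange)
    rw [hadd, modLength_congr R e1, modLength_congr R e2.symm]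
    ring
  -- put everything together over ℚ
  have hcolon : colonPow R x nn = colonPow R x l := hmem nn hnl
  have : (e 0 : ℚ) = (modLength R (R ⧸ colonPow R x l) : ℚ) := by
    rw [← hpoly, h1, h2, hf1, hf2, key, hcolon]
    push_cast
    ring
  exact_mod_cast this
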